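/- arXiv:2404.08599 — 3 statements merged into one kernel-verified Lean document; each statement's English description precedes it below -/
import Mathlib

section
/- Let G* be a densest subgraph of G. Then every vertex of G* has degree (within G*) at least ⌈ρ(G*)⌉. -/
open SimpleGraph

noncomputable def subgraphDensity {V : Type*} {G : SimpleGraph V} (H : G.Subgraph) : ℚ :=
  (H.edgeSet.ncard : ℚ) / (H.verts.ncard : ℚ)

def IsDensest {V : Type*} {G : SimpleGraph V} (H : G.Subgraph) : Prop :=
  H.verts.Nonempty ∧ ∀ H' : G.Subgraph, H'.verts.Nonempty → subgraphDensity H' ≤ subgraphDensity H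

theorem stmt_4 {V : Type*} [Fintype V] (G : SimpleGraph V) (Hstar : G.Subgraph)
    (hdense : IsDensest Hstar) (v : V) (hv : v ∈ Hstar.verts) :
    ⌈subgraphDensity Hstar⌉ ≤ ((Hstar.neighborSet v).ncard : ℤ) := by
  classical
  by_cases hsing : Hstar.verts ⊆ {v}
  · -- verts = {v}, so no edges and density 0
    have hedge : Hstar.edgeSet = ∅ := by
      ext e
      refine Sym2.ind (fun a b => ?_) e
      simp only [Subgraph.mem_edgeSet, Set.mem_empty_iff_false, iff_false]
      intro hab
      have ha := hsing hab.fst_mem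
      have hb := hsing hab.snd_mem
      simp only [Set.mem_singleton_iff] at ha hb
      rw [ha, hb] at hab
      exact G.loopless.irrefl v hab.adj_sub
    have h0 : subgraphDensity Hstar = 0 := by
      rw [subgraphDensity, hedge]; simp
    rw [h0]
    simp
  · rw [Set.not_subset] at hsing
    obtain ⟨w, hw, hwv⟩ := hsing
    rw [Set.mem_singleton_iff] at hwv
    set H' := Hstar.deleteVerts {v} with hH'
    have hne' : H'.verts.Nonempty := by
      refine ⟨w, ?_⟩
      rw [hH', Subgraph.deleteVerts_verts]
      exact ⟨hw, by simp [hwv]⟩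
    -- vertex counts
    have hnn : H'.verts.ncard + 1 = Hstar.verts.ncard := by
      rw [hH', Subgraph.deleteVerts_verts]
      exact Set.ncard_diff_singleton_add_one hv Hstar.verts.toFinite
    -- edge count: edges of Hstar are edges of H' plus edges at v
    have hsub : Hstar.edgeSet ⊆ H'.edgeSet ∪ (fun u => s(v, u)) '' Hstar.neighborSet v := by
      intro e he
      induction e using Sym2.ind with
      | _ a b =>
        rw [Subgraph.mem_edgeSet] at he
        by_cases hav : a = v
        · subst hav
          exact Or.inr ⟨b, he, rfl⟩
        by_cases hbv : b = v
        · subst hbv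
          exact Or.inr ⟨a, he.symm, Sym2.eq_swap⟩
        · left
          rw [Subgraph.mem_edgeSet, hH', Subgraph.deleteVerts_adj]
          exact ⟨he.fst_mem, by simpa using hav, he.snd_mem, by simpa using hbv, he⟩
    have hcard : Hstar.edgeSet.ncard ≤ H'.edgeSet.ncard + (Hstar.neighborSet v).ncard := by
      calc Hstar.edgeSet.ncard
          ≤ (H'.edgeSet ∪ (fun u => s(v, u)) '' Hstar.neighborSet v).ncard :=
            Set.ncard_le_ncard hsub ((H'.edgeSet.toFinite).union ((Hstar.neighborSet v).toFinite.image _))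
        _ ≤ H'.edgeSet.ncard + ((fun u => s(v, u)) '' Hstar.neighborSet v).ncard :=
            Set.ncard_union_le _ _
        _ ≤ H'.edgeSet.ncard + (Hstar.neighborSet v).ncard := by
            gcongr
            exact Set.ncard_image_le (Hstar.neighborSet v).toFinite
    have hdle := hdense.2 H' hne'
    -- rationals
    set m : ℚ := (Hstar.edgeSet.ncard : ℚ) with hmdef
    set m' : ℚ := (H'.edgeSet.ncard : ℚ) with hm'def
    set n' : ℚ := (H'.verts.ncard : ℚ) with hn'def
    set d : ℚ := ((Hstar.neighborSet v).ncard : ℚ) with hddef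
    have hn'pos : 0 < n' := by
      have := hne'.ncard_pos H'.verts.toFinite
      rw [hn'def]; exact_mod_cast this
    have hn : (Hstar.verts.ncard : ℚ) = n' + 1 := by
      rw [hn'def]; exact_mod_cast hnn.symm
    have hnpos : (0:ℚ) < n' + 1 := by linarith
    have hmd : m ≤ m' + d := by
      rw [hmdef, hm'def, hddef]; exact_mod_cast hcard
    rw [subgraphDensity, subgraphDensity, hn] at hdle
    rw [div_le_div_iff₀ hn'pos hnpos] at hdle
    have hmn : m ≤ d * (n' + 1) := by nlinarith
    rw [subgraphDensity, hn]
    rw [Int.ceil_le]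
    push_cast
    rw [div_le_iff₀ hnpos]
    exact hmn
end

section
/- In a graph G with a vertex cover C, if two vertices u, v outside C have identical neighborhoods (N(u) = N(v) ⊆ C), then for any subgraph H containing u but not v, the graph obtained by adding v (with edges to N(v) ∩ V(H)) has density at least min(ρ(H), ρ of the added part), and consequently there exists a densest subgraph of G that, for each twin-class of the independent set, contains either all or none of its vertices. -/
open SimpleGraph

section Aux

variable {V : Type*} [Fintype V] {G : SimpleGraph V}

private lemma finite_subgraph (G : SimpleGraph V) : Finite G.Subgraph := by
  apply Finite.of_injective (fun H : G.Subgraph => (H.verts, H.Adj))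
  intro H1 H2 h
  obtain ⟨h1, h2⟩ := Prod.mk.injEq _ _ _ _ ▸ h
  exact SimpleGraph.Subgraph.ext h1 h2

private lemma sym2_image_mem (v : V) (S : Set V) (x y : V) :
    s(x,y) ∈ (fun w => s(v,w)) '' S ↔ (x = v ∧ y ∈ S) ∨ (y = v ∧ x ∈ S) := by
  constructor
  · rintro ⟨w, hw, he⟩
    rw [Sym2.eq_iff] at he
    rcases he with ⟨h1, h2⟩ | ⟨h1, h2⟩
    · exact Or.inl ⟨h1.symm, h2 ▸ hw⟩
    · exact Or.inr ⟨h1.symm, h2 ▸ hw⟩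
  · rintro (⟨rfl, hy⟩ | ⟨rfl, hx⟩)
    · exact ⟨y, hy, rfl⟩
    · exact ⟨x, hx, Sym2.eq_swap⟩

private lemma sym2_injOn (v : V) (S : Set V) : Set.InjOn (fun w => s(v,w)) S := by
  intro w1 _ w2 _ h
  exact Sym2.congr_right.mp h

private lemma numeric (m k n : ℕ) (hn : 0 < n) :
    min ((m : ℚ)/n) k ≤ ((m : ℚ) + k)/((n : ℚ) + 1) := by
  have hn' : (0:ℚ) < n := by exact_mod_cast hn
  have hn1 : (0:ℚ) < (n : ℚ) + 1 := by linarith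
  have hk : (0:ℚ) ≤ k := by positivity
  rcases le_total ((m : ℚ)) ((n : ℚ) * k) with h | h
  · refine le_trans (min_le_left _ _) ?_
    rw [div_le_div_iff₀ hn' hn1]
    nlinarith
  · refine le_trans (min_le_right _ _) ?_
    rw [le_div_iff₀ hn1]
    nlinarith

private lemma part1 (H H' : G.Subgraph) (v : V) (hne : H.verts.Nonempty)
    (hvH : v ∉ H.verts)
    (hverts : H'.verts = insert v H.verts)
    (hadj : ∀ a b : V, H'.Adj a b ↔ H.Adj a b ∨
        (a = v ∧ b ∈ G.neighborSet v ∩ H.verts) ∨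
        (b = v ∧ a ∈ G.neighborSet v ∩ H.verts)) :
    min (subgraphDensity H) ((G.neighborSet v ∩ H.verts).ncard : ℚ) ≤
      subgraphDensity H' := by
  have hE : H'.edgeSet = H.edgeSet ∪ (fun w => s(v,w)) '' (G.neighborSet v ∩ H.verts) := by
    ext e
    induction e using Sym2.ind with
    | _ x y =>
      rw [Set.mem_union, sym2_image_mem, Subgraph.mem_edgeSet, Subgraph.mem_edgeSet, hadj]
  have hdisj : Disjoint H.edgeSet ((fun w => s(v,w)) '' (G.neighborSet v ∩ H.verts)) := by
    rw [Set.disjoint_right]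
    rintro e ⟨w, _, rfl⟩ he
    exact hvH (Subgraph.mem_edgeSet.mp he).fst_mem
  have hcardE : H'.edgeSet.ncard = H.edgeSet.ncard + (G.neighborSet v ∩ H.verts).ncard := by
    rw [hE, Set.ncard_union_eq hdisj (Set.toFinite _) (Set.toFinite _),
      Set.ncard_image_of_injOn (sym2_injOn v _)]
  have hcardV : H'.verts.ncard = H.verts.ncard + 1 := by
    rw [hverts, Set.ncard_insert_of_notMem hvH (Set.toFinite _)]
  have hn : 0 < H.verts.ncard := (Set.ncard_pos (Set.toFinite _)).mpr hne
  unfold subgraphDensity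
  rw [hcardE, hcardV]
  push_cast
  exact numeric _ _ _ hn

/-- In a densest subgraph, |E| ≤ |V| * |N_G(a) ∩ V| for every vertex a of it. -/
private lemma edge_bound (Hs : G.Subgraph)
    (hmax : ∀ H : G.Subgraph, H.verts.Nonempty → subgraphDensity H ≤ subgraphDensity Hs)
    (a : V) (ha : a ∈ Hs.verts) :
    (Hs.edgeSet.ncard : ℚ) ≤ (Hs.verts.ncard : ℚ) * ((G.neighborSet a ∩ Hs.verts).ncard : ℚ) := by
  set H'' : G.Subgraph :=
    { verts := Hs.verts \ {a}
      Adj := fun x y => Hs.Adj x y ∧ x ≠ a ∧ y ≠ a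
      adj_sub := fun h => Hs.adj_sub h.1
      edge_vert := fun h => ⟨h.1.fst_mem, h.2.1⟩
      symm := ⟨fun x y h => ⟨h.1.symm, h.2.2, h.2.1⟩⟩ } with hH''
  have hE : Hs.edgeSet = H''.edgeSet ∪ (fun w => s(a,w)) '' {w | Hs.Adj a w} := by
    ext e
    induction e using Sym2.ind with
    | _ x y =>
      rw [Set.mem_union, sym2_image_mem, Subgraph.mem_edgeSet, Subgraph.mem_edgeSet]
      constructor
      · intro h
        by_cases hx : x = a
        · exact Or.inr (Or.inl ⟨hx, by simpa [hx] using h⟩)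
        by_cases hy : y = a
        · exact Or.inr (Or.inr ⟨hy, by simpa [hy] using h.symm⟩)
        · exact Or.inl ⟨h, hx, hy⟩
      · rintro (⟨h, _, _⟩ | ⟨rfl, h⟩ | ⟨rfl, h⟩)
        · exact h
        · exact h
        · exact h.symm
  have hdisj : Disjoint H''.edgeSet ((fun w => s(a,w)) '' {w | Hs.Adj a w}) := by
    rw [Set.disjoint_right]
    rintro e ⟨w, _, rfl⟩ he
    exact (Subgraph.mem_edgeSet.mp he).2.1 rfl
  have hcardE : Hs.edgeSet.ncard = H''.edgeSet.ncard + ({w | Hs.Adj a w}).ncard := by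
    rw [hE, Set.ncard_union_eq hdisj (Set.toFinite _) (Set.toFinite _),
      Set.ncard_image_of_injOn (sym2_injOn a _)]
  have hcardV : Hs.verts.ncard = H''.verts.ncard + 1 := by
    have h1 : (Hs.verts \ {a}).ncard + 1 = Hs.verts.ncard :=
      Set.ncard_diff_singleton_add_one ha (Set.toFinite Hs.verts)
    have h2 : H''.verts = Hs.verts \ {a} := rfl
    rw [h2]
    omega
  have hdk : ({w | Hs.Adj a w}).ncard ≤ (G.neighborSet a ∩ Hs.verts).ncard := by
    apply Set.ncard_le_ncard _ (Set.toFinite _)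
    intro w hw
    exact ⟨Hs.adj_sub hw, hw.snd_mem⟩
  set m'' := H''.edgeSet.ncard
  set d := ({w | Hs.Adj a w}).ncard
  set k := (G.neighborSet a ∩ Hs.verts).ncard
  set n'' := H''.verts.ncard
  rcases Nat.eq_zero_or_pos n'' with h0 | hpos
  · -- H''.verts empty, so Hs.verts = {a}; then no edges
    have hempty : H''.verts = ∅ := (Set.ncard_eq_zero (Set.toFinite _)).mp h0
    have hm'' : m'' = 0 := by
      have : H''.edgeSet = ∅ := by
        ext e
        induction e using Sym2.ind with
        | _ x y =>
          simp only [Set.mem_empty_iff_false, iff_false, Subgraph.mem_edgeSet]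
          intro h
          have hx : x ∈ H''.verts := ⟨h.1.fst_mem, h.2.1⟩
          rw [hempty] at hx
          exact hx
      simp [m'', this]
    have hd : d = 0 := by
      have : {w | Hs.Adj a w} = ∅ := by
        ext w
        simp only [Set.mem_setOf_eq, Set.mem_empty_iff_false, iff_false]
        intro h
        have hw : w ∈ H''.verts := ⟨h.snd_mem, fun hwa => h.ne (hwa.symm ▸ rfl)⟩
        rw [hempty] at hw
        exact hw
      simp [d, this]
    have : Hs.edgeSet.ncard = 0 := by omega
    rw [this]
    positivity
  · -- H'' nonempty; use maximality
    have hne'' : H''.verts.Nonempty := (Set.ncard_pos (Set.toFinite _)).mp hpos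
    have hle := hmax H'' hne''
    unfold subgraphDensity at hle
    rw [hcardE, hcardV] at hle ⊢
    have hn'' : (0:ℚ) < (n'' : ℚ) := by exact_mod_cast hpos
    have hn1 : (0:ℚ) < (n'' : ℚ) + 1 := by linarith
    rw [show ((n'' + 1 : ℕ) : ℚ) = (n'' : ℚ) + 1 by push_cast; ring] at hle ⊢
    rw [div_le_div_iff₀ hn'' hn1] at hle
    have hdk' : (d : ℚ) ≤ (k : ℚ) := by exact_mod_cast hdk
    push_cast at hle ⊢
    nlinarith

end Aux

theorem stmt_17 {V : Type*} [Fintype V] [Nonempty V] (G : SimpleGraph V) (C : Set V)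
    (hC : ∀ e ∈ G.edgeSet, ∃ x ∈ C, x ∈ e)
    (u v : V) (hu : u ∉ C) (hv : v ∉ C) (huv : u ≠ v)
    (htwin : G.neighborSet u = G.neighborSet v) :
    (∀ H H' : G.Subgraph, H.verts.Nonempty → u ∈ H.verts → v ∉ H.verts →
      H'.verts = insert v H.verts →
      (∀ a b : V, H'.Adj a b ↔ H.Adj a b ∨
        (a = v ∧ b ∈ G.neighborSet v ∩ H.verts) ∨
        (b = v ∧ a ∈ G.neighborSet v ∩ H.verts)) →
      min (subgraphDensity H) ((G.neighborSet v ∩ H.verts).ncard : ℚ) ≤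
        subgraphDensity H') ∧
    (∃ Hstar : G.Subgraph, Hstar.verts.Nonempty ∧
      (∀ H : G.Subgraph, H.verts.Nonempty → subgraphDensity H ≤ subgraphDensity Hstar) ∧
      ∀ a b : V, a ∉ C → b ∉ C → G.neighborSet a = G.neighborSet b →
        (a ∈ Hstar.verts ↔ b ∈ Hstar.verts)) := by
  have : Finite G.Subgraph := finite_subgraph G
  constructor
  · intro H H' hne _ hvH hverts hadj
    exact part1 H H' v hne hvH hverts hadj
  · -- existence of a densest subgraph, maximal in vertex count among densest
    set S : Set G.Subgraph := {H | H.verts.Nonempty} with hS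
    have hSne : S.Nonempty := by
      refine ⟨G.singletonSubgraph (Classical.arbitrary V), ?_⟩
      rw [hS, Set.mem_setOf_eq, singletonSubgraph_verts]
      exact Set.singleton_nonempty _
    obtain ⟨H0, hH0S, hH0max⟩ :=
      Set.Finite.exists_maximalFor subgraphDensity S (Set.toFinite S) hSne
    have hH0 : ∀ H : G.Subgraph, H.verts.Nonempty → subgraphDensity H ≤ subgraphDensity H0 := by
      intro H hH
      rcases le_total (subgraphDensity H) (subgraphDensity H0) with h | h
      · exact h
      · exact (hH0max hH h).ge
    set T : Set G.Subgraph :=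
      {H | H.verts.Nonempty ∧
        ∀ H' : G.Subgraph, H'.verts.Nonempty → subgraphDensity H' ≤ subgraphDensity H} with hT
    have hTne : T.Nonempty := ⟨H0, hH0S, hH0⟩
    obtain ⟨Hs, hHsT, hHsmax⟩ :=
      Set.Finite.exists_maximalFor (fun H : G.Subgraph => H.verts.ncard) T (Set.toFinite T) hTne
    obtain ⟨hHsne, hHsdense⟩ := hHsT
    -- helper: twins can't be split by Hs
    have key : ∀ a b : V, G.neighborSet a = G.neighborSet b →
        a ∈ Hs.verts → b ∉ Hs.verts → False := by
      intro a b hab haH hbH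
      have hne_ab : a ≠ b := fun h => hbH (h ▸ haH)
      set H' : G.Subgraph :=
        { verts := insert b Hs.verts
          Adj := fun x y => Hs.Adj x y ∨
            (x = b ∧ y ∈ G.neighborSet b ∩ Hs.verts) ∨
            (y = b ∧ x ∈ G.neighborSet b ∩ Hs.verts)
          adj_sub := by
            rintro x y (h | ⟨rfl, hy⟩ | ⟨rfl, hx⟩)
            · exact Hs.adj_sub h
            · exact hy.1
            · exact hx.1.symm
          edge_vert := by
            rintro x y (h | ⟨rfl, _⟩ | ⟨_, hx⟩)
            · exact Or.inr h.fst_mem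
            · exact Or.inl rfl
            · exact Or.inr hx.2
          symm := by
            constructor
            rintro x y (h | ⟨rfl, hy⟩ | ⟨rfl, hx⟩)
            · exact Or.inl h.symm
            · exact Or.inr (Or.inr ⟨rfl, hy⟩)
            · exact Or.inr (Or.inl ⟨rfl, hx⟩) } with hH'
      have hmin := part1 Hs H' b hHsne hbH rfl (fun _ _ => Iff.rfl)
      have hn : 0 < Hs.verts.ncard := (Set.ncard_pos (Set.toFinite _)).mpr hHsne
      have hnQ : (0:ℚ) < (Hs.verts.ncard : ℚ) := by exact_mod_cast hn
      have hbound := edge_bound Hs hHsdense a haH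
      rw [hab] at hbound
      have hrho_le_k : subgraphDensity Hs ≤ ((G.neighborSet b ∩ Hs.verts).ncard : ℚ) := by
        unfold subgraphDensity
        rw [div_le_iff₀ hnQ]
        linarith [hbound]
      have hmin' : subgraphDensity Hs ≤ subgraphDensity H' := by
        rw [min_eq_left hrho_le_k] at hmin
        exact hmin
      have hH'ne : H'.verts.Nonempty := ⟨b, Or.inl rfl⟩
      have hH'T : H' ∈ T := by
        refine ⟨hH'ne, fun H'' hH'' => le_trans (hHsdense H'' hH'') hmin'⟩
      have hcard : H'.verts.ncard = Hs.verts.ncard + 1 := by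
        show (insert b Hs.verts).ncard = _
        rw [Set.ncard_insert_of_notMem hbH (Set.toFinite _)]
      have : H'.verts.ncard ≤ Hs.verts.ncard :=
        hHsmax hH'T (by show Hs.verts.ncard ≤ H'.verts.ncard; omega)
      omega
    refine ⟨Hs, hHsne, hHsdense, ?_⟩
    intro a b _ _ hab
    constructor
    · intro h
      by_contra h'
      exact key a b hab h h'
    · intro h
      by_contra h'
      exact key b a hab.symm h h'
end

section
/- For any graph G and any densest subgraph H of G, the subdivision S(H) is a densest subgraph of S(G): ρ*(S(G)) = ρ(S(H)) = 2 m_H/(n_H + m_H). -/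
open SimpleGraph

noncomputable def graphDensity {V : Type*} (G : SimpleGraph V) : ℚ :=
  (G.edgeSet.ncard : ℚ) / (Nat.card V : ℚ)

def subdivide {V : Type*} (G : SimpleGraph V) : SimpleGraph (V ⊕ G.edgeSet) :=
  SimpleGraph.fromRel (fun a b =>
    match a, b with
    | Sum.inl v, Sum.inr e => v ∈ (e : Sym2 V)
    | _, _ => False)

section Aux

open Sum Set

lemma out_ne' {W : Type*} {G : SimpleGraph W} {e : Sym2 W} (he : e ∈ G.edgeSet) :
    e.out.1 ≠ e.out.2 := by
  intro h
  have : e.IsDiag := by rw [← e.out_eq]; exact h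
  exact G.not_isDiag_of_mem_edgeSet he this

lemma mem_out' {W : Type*} {e : Sym2 W} {v : W} (hv : v ∈ e) : v = e.out.1 ∨ v = e.out.2 := by
  rw [← e.out_eq] at hv
  exact Sym2.mem_iff'.mp hv

lemma unique_other' {W : Type*} {e : Sym2 W} {x v w : W} (hx : x ∈ e) (hv : v ∈ e) (hw : w ∈ e)
    (hxv : x ≠ v) (hxw : x ≠ w) : v = w := by
  rcases mem_out' hx with h | h <;> rcases mem_out' hv with h' | h' <;>
      rcases mem_out' hw with h'' | h'' <;>
    first
      | exact h'.trans h''.symm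
      | exact absurd (h.trans h'.symm) hxv
      | exact absurd (h.trans h''.symm) hxw

lemma subdivide_adj {W : Type*} (G : SimpleGraph W) (a b : W ⊕ G.edgeSet) :
    (subdivide G).Adj a b ↔ ∃ (v : W) (e : G.edgeSet), v ∈ (e : Sym2 W) ∧
      ((a = inl v ∧ b = inr e) ∨ (a = inr e ∧ b = inl v)) := by
  unfold subdivide
  rw [fromRel_adj]
  constructor
  · rintro ⟨hne, h | h⟩
    · match a, b with
      | inl v, inr e => exact ⟨v, e, h, Or.inl ⟨rfl, rfl⟩⟩
    · match b, a with
      | inl v, inr e => exact ⟨v, e, h, Or.inr ⟨rfl, rfl⟩⟩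
  · rintro ⟨v, e, hv, ⟨rfl, rfl⟩ | ⟨rfl, rfl⟩⟩
    · exact ⟨by simp, Or.inl hv⟩
    · exact ⟨by simp, Or.inr hv⟩

def ι {W : Type*} (G : SimpleGraph W) (p : W × G.edgeSet) : Sym2 (W ⊕ G.edgeSet) :=
  s(inl p.1, inr p.2)

lemma ι_injective {W : Type*} (G : SimpleGraph W) : Function.Injective (ι G) := by
  rintro ⟨v, e⟩ ⟨v', e'⟩ h
  simp only [ι, Sym2.eq_iff] at h
  rcases h with ⟨h1, h2⟩ | ⟨h1, h2⟩ <;> simp_all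

lemma edgeSet_subdivide {W : Type*} (G : SimpleGraph W) :
    (subdivide G).edgeSet = ι G '' {p : W × G.edgeSet | p.1 ∈ (p.2 : Sym2 W)} := by
  ext x
  induction x with
  | _ a b =>
    rw [mem_edgeSet, subdivide_adj]
    constructor
    · rintro ⟨v, e, hv, ⟨rfl, rfl⟩ | ⟨rfl, rfl⟩⟩
      · exact ⟨(v, e), hv, rfl⟩
      · exact ⟨(v, e), hv, Sym2.eq_swap⟩
    · rintro ⟨⟨v, e⟩, hv, h⟩
      rw [show ι G (v, e) = s(inl v, inr e) from rfl, Sym2.eq_iff] at h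
      rcases h with ⟨rfl, rfl⟩ | ⟨rfl, rfl⟩
      · exact ⟨v, e, hv, Or.inl ⟨rfl, rfl⟩⟩
      · exact ⟨v, e, hv, Or.inr ⟨rfl, rfl⟩⟩

lemma ncard_incidence {W : Type*} [Finite W] (G : SimpleGraph W) (S : Set (Sym2 W))
    (hS : S ⊆ G.edgeSet) :
    {p : W × G.edgeSet | (p.2 : Sym2 W) ∈ S ∧ p.1 ∈ (p.2 : Sym2 W)}.ncard = 2 * S.ncard := by
  classical
  set T := {p : W × G.edgeSet | (p.2 : Sym2 W) ∈ S ∧ p.1 ∈ (p.2 : Sym2 W)} with hT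
  let f : ↥S × Bool → ↥T := fun q =>
    ⟨(if q.2 then (q.1 : Sym2 W).out.1 else (q.1 : Sym2 W).out.2, ⟨q.1, hS q.1.2⟩), by
      refine ⟨q.1.2, ?_⟩
      by_cases hb : q.2 <;> simp [hb, Sym2.out_fst_mem, Sym2.out_snd_mem]⟩
  have hbij : Function.Bijective f := by
    constructor
    · rintro ⟨⟨e, he⟩, b⟩ ⟨⟨e', he'⟩, b'⟩ hq
      have h2 : e = e' :=
        congrArg (fun p => ((p : W × G.edgeSet).2 : Sym2 W)) (Subtype.ext_iff.mp hq)
      subst h2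
      have h1 := congrArg (fun p => (p : W × G.edgeSet).1) (Subtype.ext_iff.mp hq)
      simp only [f] at h1
      have := out_ne' (G := G) (hS he)
      cases b <;> cases b' <;> simp_all
    · rintro ⟨⟨v, e⟩, hve, hmem⟩
      rcases mem_out' hmem with h | h
      · exact ⟨(⟨e, hve⟩, true), by simp [f, h.symm]⟩
      · exact ⟨(⟨e, hve⟩, false), by simp [f, h.symm]⟩
  have := Nat.card_eq_of_bijective f hbij
  rw [Nat.card_prod, Nat.card_coe_set_eq, Nat.card_coe_set_eq,
    Nat.card_eq_fintype_card] at this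
  simp only [Fintype.card_bool] at this
  omega

lemma ncard_edgeSet_subdivide {W : Type*} [Finite W] (G : SimpleGraph W) :
    (subdivide G).edgeSet.ncard = 2 * G.edgeSet.ncard := by
  rw [edgeSet_subdivide, Set.ncard_image_of_injective _ (ι_injective G)]
  have h : {p : W × G.edgeSet | p.1 ∈ (p.2 : Sym2 W)} =
      {p : W × G.edgeSet | (p.2 : Sym2 W) ∈ G.edgeSet ∧ p.1 ∈ (p.2 : Sym2 W)} := by
    ext ⟨v, e⟩
    simp [e.2]
  rw [h, ncard_incidence G G.edgeSet subset_rfl]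

lemma graphDensity_subdivide {W : Type*} [Finite W] (G : SimpleGraph W) :
    graphDensity (subdivide G) =
      (2 * G.edgeSet.ncard : ℚ) / ((Nat.card W : ℚ) + (G.edgeSet.ncard : ℚ)) := by
  have h1 : Nat.card (W ⊕ G.edgeSet) = Nat.card W + G.edgeSet.ncard := by
    rw [Nat.card_sum, Nat.card_coe_set_eq]
  rw [graphDensity, ncard_edgeSet_subdivide, h1]
  push_cast
  ring

def witnessK {V : Type*} (G : SimpleGraph V) (H : G.Subgraph) : (subdivide G).Subgraph where
  verts := inl '' H.verts ∪ inr '' {e : G.edgeSet | (e : Sym2 V) ∈ H.edgeSet}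
  Adj a b := ∃ (v : V) (e : G.edgeSet), (e : Sym2 V) ∈ H.edgeSet ∧ v ∈ (e : Sym2 V) ∧
      ((a = inl v ∧ b = inr e) ∨ (a = inr e ∧ b = inl v))
  adj_sub := by
    rintro a b ⟨v, e, he, hv, h⟩
    exact (subdivide_adj G a b).mpr ⟨v, e, hv, h⟩
  edge_vert := by
    rintro a b ⟨v, e, he, hv, ⟨rfl, rfl⟩ | ⟨rfl, rfl⟩⟩
    · exact Or.inl ⟨v, Subgraph.mem_verts_of_mem_edge he hv, rfl⟩
    · exact Or.inr ⟨e, he, rfl⟩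
  symm := by
    constructor
    rintro a b ⟨v, e, he, hv, h⟩
    exact ⟨v, e, he, hv, h.symm.imp And.symm And.symm⟩

lemma witnessK_verts_ncard {V : Type*} [Finite V] (G : SimpleGraph V) (H : G.Subgraph) :
    (witnessK G H).verts.ncard = H.verts.ncard + H.edgeSet.ncard := by
  have hdisj : Disjoint (inl '' H.verts : Set (V ⊕ G.edgeSet))
      (inr '' {e : G.edgeSet | (e : Sym2 V) ∈ H.edgeSet}) := by
    rw [Set.disjoint_iff_inter_eq_empty]
    ext x
    simp only [Set.mem_inter_iff, Set.mem_image, Set.mem_empty_iff_false, iff_false]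
    rintro ⟨⟨v, _, rfl⟩, ⟨e, _, h⟩⟩
    exact absurd h (by simp)
  have h1 : (inl '' H.verts : Set (V ⊕ G.edgeSet)).ncard = H.verts.ncard :=
    Set.ncard_image_of_injective _ inl_injective
  have h2 : (inr '' {e : G.edgeSet | (e : Sym2 V) ∈ H.edgeSet} : Set (V ⊕ G.edgeSet)).ncard
      = H.edgeSet.ncard := by
    rw [Set.ncard_image_of_injective _ inr_injective]
    have : Subtype.val '' {e : G.edgeSet | (e : Sym2 V) ∈ H.edgeSet} = H.edgeSet := by
      ext e
      simp only [Set.mem_image, Set.mem_setOf_eq, Subtype.exists, exists_and_left]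
      constructor
      · rintro ⟨e', he', _, rfl⟩; exact he'
      · exact fun he => ⟨e, he, H.edgeSet_subset he, rfl⟩
    have h3 := Set.ncard_image_of_injective {e : G.edgeSet | (e : Sym2 V) ∈ H.edgeSet}
      Subtype.val_injective
    rw [this] at h3
    exact h3.symm
  show (_ ∪ _ : Set _).ncard = _
  rw [Set.ncard_union_eq hdisj (Set.toFinite _) (Set.toFinite _), h1, h2]

lemma witnessK_edgeSet {V : Type*} (G : SimpleGraph V) (H : G.Subgraph) :
    (witnessK G H).edgeSet =
      ι G '' {p : V × G.edgeSet | (p.2 : Sym2 V) ∈ H.edgeSet ∧ p.1 ∈ (p.2 : Sym2 V)} := by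
  ext x
  induction x with
  | _ a b =>
    rw [Subgraph.mem_edgeSet]
    constructor
    · rintro ⟨v, e, he, hv, ⟨rfl, rfl⟩ | ⟨rfl, rfl⟩⟩
      · exact ⟨(v, e), ⟨he, hv⟩, rfl⟩
      · exact ⟨(v, e), ⟨he, hv⟩, Sym2.eq_swap⟩
    · rintro ⟨⟨v, e⟩, ⟨he, hv⟩, h⟩
      rw [show ι G (v, e) = s(inl v, inr e) from rfl, Sym2.eq_iff] at h
      rcases h with ⟨rfl, rfl⟩ | ⟨rfl, rfl⟩
      · exact ⟨v, e, he, hv, Or.inl ⟨rfl, rfl⟩⟩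
      · exact ⟨v, e, he, hv, Or.inr ⟨rfl, rfl⟩⟩

lemma witnessK_edgeSet_ncard {V : Type*} [Finite V] (G : SimpleGraph V) (H : G.Subgraph) :
    (witnessK G H).edgeSet.ncard = 2 * H.edgeSet.ncard := by
  rw [witnessK_edgeSet, Set.ncard_image_of_injective _ (ι_injective G),
    ncard_incidence G H.edgeSet H.edgeSet_subset]

lemma witnessK_density {V : Type*} [Finite V] (G : SimpleGraph V) (H : G.Subgraph) :
    subgraphDensity (witnessK G H) =
      (2 * H.edgeSet.ncard : ℚ) / ((H.verts.ncard : ℚ) + (H.edgeSet.ncard : ℚ)) := by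
  rw [subgraphDensity, witnessK_edgeSet_ncard, witnessK_verts_ncard]
  push_cast
  ring

lemma aux_densest {V : Type*} [Finite V] {G : SimpleGraph V} {H : G.Subgraph}
    (hdense : IsDensest H)
    (A : Set V) (hA : A.Nonempty) (S : Set (Sym2 V)) (hSG : S ⊆ G.edgeSet)
    (huniq : ∀ e ∈ S, ∀ v w, v ∈ e → w ∈ e → v ∉ A → w ∉ A → v = w) :
    (S.ncard : ℚ) * (H.verts.ncard : ℚ) ≤
      (H.edgeSet.ncard : ℚ) * ((A.ncard : ℚ) + ((S ∩ {e | ∃ v ∈ e, v ∉ A}).ncard : ℚ)) := by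
  classical
  set T : Set V := {v | v ∉ A ∧ ∃ e ∈ S, v ∈ e} with hTdef
  set H' : G.Subgraph := {
    verts := A ∪ T
    Adj := fun x y => G.Adj x y ∧ s(x, y) ∈ S
    adj_sub := fun h => h.1
    edge_vert := by
      rintro x y ⟨hadj, hxy⟩
      by_cases hx : x ∈ A
      · exact Or.inl hx
      · exact Or.inr ⟨hx, s(x, y), hxy, Sym2.mem_mk_left x y⟩
    symm := by
      constructor
      rintro x y ⟨hadj, hxy⟩
      exact ⟨hadj.symm, Sym2.eq_swap ▸ hxy⟩ } with hH'
  have hedge : H'.edgeSet = S := by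
    ext e
    induction e with
    | _ a b =>
      rw [Subgraph.mem_edgeSet]
      constructor
      · exact fun h => h.2
      · exact fun h => ⟨(G.mem_edgeSet).mp (hSG h), h⟩
  set S1 : Set (Sym2 V) := S ∩ {e | ∃ v ∈ e, v ∉ A} with hS1
  have hTsub : T ⊆ (fun e : Sym2 V =>
      if h : ∃ v ∈ e, v ∉ A then h.choose else hA.choose) '' S1 := by
    rintro v ⟨hvA, e, heS, hve⟩
    have he1 : e ∈ S1 := ⟨heS, v, hve, hvA⟩
    refine ⟨e, he1, ?_⟩
    have hex : ∃ x ∈ e, x ∉ A := ⟨v, hve, hvA⟩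
    simp only [dif_pos hex]
    exact (huniq e heS v hex.choose hve hex.choose_spec.1 hvA hex.choose_spec.2).symm
  have hT : T.ncard ≤ S1.ncard :=
    le_trans (Set.ncard_le_ncard hTsub (Set.toFinite _)) (Set.ncard_image_le (Set.toFinite _))
  have hvc : H'.verts.ncard ≤ A.ncard + S1.ncard :=
    le_trans (Set.ncard_union_le A T) (by omega)
  have hne : H'.verts.Nonempty := ⟨hA.choose, Or.inl hA.choose_spec⟩
  have hd := hdense.2 H' hne
  rw [subgraphDensity, subgraphDensity, hedge] at hd
  have hn : 0 < H.verts.ncard := (Set.ncard_pos (Set.toFinite _)).mpr hdense.1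
  have hv' : 0 < H'.verts.ncard := (Set.ncard_pos (Set.toFinite _)).mpr hne
  rw [div_le_div_iff₀ (by exact_mod_cast hv') (by exact_mod_cast hn)] at hd
  calc (S.ncard : ℚ) * H.verts.ncard ≤ (H.edgeSet.ncard : ℚ) * H'.verts.ncard := hd
    _ ≤ (H.edgeSet.ncard : ℚ) * (A.ncard + S1.ncard) := by
        have : (H'.verts.ncard : ℚ) ≤ (A.ncard : ℚ) + S1.ncard := by exact_mod_cast hvc
        exact mul_le_mul_of_nonneg_left this (by positivity)

lemma upper_bound {V : Type*} [Finite V] {G : SimpleGraph V} {H : G.Subgraph}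
    (hdense : IsDensest H) (K : (subdivide G).Subgraph) (hK : K.verts.Nonempty) :
    subgraphDensity K ≤
      (2 * H.edgeSet.ncard : ℚ) / ((H.verts.ncard : ℚ) + (H.edgeSet.ncard : ℚ)) := by
  classical
  set n := H.verts.ncard with hn
  set m := H.edgeSet.ncard with hm
  have hn1 : 1 ≤ n := (Set.ncard_pos (Set.toFinite _)).mpr hdense.1
  have hnm : (0 : ℚ) < (n : ℚ) + m := by
    have : (1:ℚ) ≤ (n:ℚ) := by exact_mod_cast hn1
    positivity
  set A : Set V := {v | inl v ∈ K.verts} with hA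
  set B : Set G.edgeSet := {e | inr e ∈ K.verts} with hB
  set B' : Set (Sym2 V) := Subtype.val '' B with hB'
  have hB'G : B' ⊆ G.edgeSet := by rintro e ⟨e', _, rfl⟩; exact e'.2
  set B2 : Set (Sym2 V) := {e ∈ B' | ∀ v ∈ e, v ∈ A} with hB2
  set B1 : Set (Sym2 V) := {e ∈ B' | (∃ v ∈ e, v ∈ A) ∧ ¬(∀ v ∈ e, v ∈ A)} with hB1
  have hverts : K.verts = (inl '' A) ∪ (inr '' B) := by
    ext x
    cases x with
    | inl v => simp [hA, Set.mem_image]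
    | inr e => simp [hB, Set.mem_image]
  have hvc : K.verts.ncard = A.ncard + B.ncard := by
    rw [hverts, Set.ncard_union_eq (by
        rw [Set.disjoint_iff_inter_eq_empty]
        ext x
        simp only [Set.mem_inter_iff, Set.mem_image, Set.mem_empty_iff_false, iff_false]
        rintro ⟨⟨v, _, rfl⟩, ⟨e, _, h⟩⟩
        exact absurd h (by simp)) (Set.toFinite _) (Set.toFinite _),
      Set.ncard_image_of_injective _ inl_injective,
      Set.ncard_image_of_injective _ inr_injective]
  have hbb : B.ncard = B'.ncard := (Set.ncard_image_of_injective _ Subtype.val_injective).symm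
  set Q2 : Set (V × G.edgeSet) := {p | (p.2 : Sym2 V) ∈ B2 ∧ p.1 ∈ (p.2 : Sym2 V)} with hQ2
  set Q1 : Set (V × G.edgeSet) :=
    {p | (p.2 : Sym2 V) ∈ B1 ∧ p.1 ∈ (p.2 : Sym2 V) ∧ p.1 ∈ A} with hQ1
  have hKQ : K.edgeSet ⊆ ι G '' (Q2 ∪ Q1) := by
    intro x hx
    have hx' := K.edgeSet_subset hx
    rw [edgeSet_subdivide] at hx'
    obtain ⟨⟨v, e⟩, hve, rfl⟩ := hx'
    have hvK : inl v ∈ K.verts := Subgraph.mem_verts_of_mem_edge hx (by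
      show inl v ∈ s(inl v, inr e); simp [ι])
    have heK : inr e ∈ K.verts := Subgraph.mem_verts_of_mem_edge hx (by
      show inr e ∈ s(inl v, inr e); simp [ι])
    have hvA : v ∈ A := hvK
    have heB' : (e : Sym2 V) ∈ B' := ⟨e, heK, rfl⟩
    by_cases hall : ∀ w ∈ (e : Sym2 V), w ∈ A
    · exact ⟨(v, e), Or.inl ⟨⟨heB', hall⟩, hve⟩, rfl⟩
    · exact ⟨(v, e), Or.inr ⟨⟨heB', ⟨v, hve, hvA⟩, hall⟩, hve, hvA⟩, rfl⟩
  have hQ2c : Q2.ncard = 2 * B2.ncard :=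
    ncard_incidence G B2 (fun e he => hB'G he.1)
  have hQ1c : Q1.ncard ≤ B1.ncard := by
    apply Set.ncard_le_ncard_of_injOn (fun p => (p.2 : Sym2 V))
    · exact fun p hp => hp.1
    · rintro ⟨v, e⟩ ⟨he1, hv1, hvA1⟩ ⟨w, e'⟩ ⟨he2, hv2, hvA2⟩ (heq : (e : Sym2 V) = e')
      have he' : e = e' := Subtype.ext heq
      subst he'
      obtain ⟨-, -, hnall⟩ := he1
      push_neg at hnall
      obtain ⟨z, hz, hzA⟩ := hnall
      have hvz : z ≠ v := fun h => hzA (h.symm ▸ hvA1)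
      have hwz : z ≠ w := fun h => hzA (h.symm ▸ hvA2)
      have hvw : v = w := unique_other' hz hv1 hv2 hvz hwz
      rw [hvw]
  have hfQ : K.edgeSet.ncard ≤ 2 * B2.ncard + B1.ncard := by
    calc K.edgeSet.ncard ≤ (ι G '' (Q2 ∪ Q1)).ncard :=
          Set.ncard_le_ncard hKQ (Set.toFinite _)
      _ = (Q2 ∪ Q1).ncard := Set.ncard_image_of_injective _ (ι_injective G)
      _ ≤ Q2.ncard + Q1.ncard := Set.ncard_union_le _ _
      _ ≤ 2 * B2.ncard + B1.ncard := by omega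
  have hdisj12 : Disjoint B1 B2 := by
    rw [Set.disjoint_iff_inter_eq_empty]
    ext e
    simp only [Set.mem_inter_iff, Set.mem_empty_iff_false, iff_false]
    rintro ⟨⟨-, -, hnall⟩, ⟨-, hall⟩⟩
    exact hnall hall
  have hsub12 : B1 ∪ B2 ⊆ B' := by rintro e (he | he) <;> exact he.1
  have hb12 : B1.ncard + B2.ncard ≤ B'.ncard := by
    rw [← Set.ncard_union_eq hdisj12 (Set.toFinite _) (Set.toFinite _)]
    exact Set.ncard_le_ncard hsub12 (Set.toFinite _)
  by_cases hAne : A.Nonempty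
  · have hI1 : (B2.ncard : ℚ) * n ≤ (m : ℚ) * A.ncard := by
      have := aux_densest hdense A hAne B2 (fun e he => hB'G he.1)
        (by
          rintro e ⟨-, hall⟩ v w hv hw hvA hwA
          exact absurd (hall v hv) hvA)
      have hempty : B2 ∩ {e | ∃ v ∈ e, v ∉ A} = ∅ := by
        ext e
        simp only [Set.mem_inter_iff, Set.mem_empty_iff_false, iff_false, not_and]
        rintro ⟨-, hall⟩ ⟨v, hv, hvA⟩
        exact hvA (hall v hv)
      rw [hempty] at this
      simpa using this
    have hI2 : ((B1.ncard + B2.ncard : ℕ) : ℚ) * n ≤ (m : ℚ) * (A.ncard + B1.ncard) := by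
      have huniq : ∀ e ∈ B1 ∪ B2, ∀ v w, v ∈ e → w ∈ e → v ∉ A → w ∉ A → v = w := by
        rintro e (⟨-, ⟨x, hx, hxA⟩, -⟩ | ⟨-, hall⟩) v w hv hw hvA hwA
        · have hxv : x ≠ v := fun h => hvA (h ▸ hxA)
          have hxw : x ≠ w := fun h => hwA (h ▸ hxA)
          exact unique_other' hx hv hw hxv hxw
        · exact absurd (hall v hv) hvA
      have := aux_densest hdense A hAne (B1 ∪ B2) (fun e he => hB'G (hsub12 he)) huniq
      have hinter : (B1 ∪ B2) ∩ {e | ∃ v ∈ e, v ∉ A} = B1 := by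
        ext e
        simp only [Set.mem_inter_iff, Set.mem_union, Set.mem_setOf_eq]
        constructor
        · rintro ⟨he | ⟨-, hall⟩, ⟨v, hv, hvA⟩⟩
          · exact he
          · exact absurd (hall v hv) hvA
        · intro he
          obtain ⟨-, -, hnall⟩ := id he
          push_neg at hnall
          exact ⟨Or.inl he, hnall⟩
      rw [hinter, Set.ncard_union_eq hdisj12 (Set.toFinite _) (Set.toFinite _)] at this
      exact_mod_cast this
    rw [subgraphDensity, hvc]
    have hKv : 0 < A.ncard + B.ncard := by
      rw [← hvc]
      exact (Set.ncard_pos (Set.toFinite _)).mpr hK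
    rw [div_le_div_iff₀ (by exact_mod_cast hKv) hnm]
    push_cast at hI2 ⊢
    have hf' : (K.edgeSet.ncard : ℚ) ≤ 2 * B2.ncard + B1.ncard := by exact_mod_cast hfQ
    have hb' : (B1.ncard : ℚ) + B2.ncard ≤ B.ncard := by rw [hbb]; exact_mod_cast hb12
    have hm0 : (0:ℚ) ≤ m := by positivity
    have hn0 : (0:ℚ) ≤ n := by positivity
    have hb10 : (0:ℚ) ≤ (B1.ncard : ℚ) := by positivity
    have hb20 : (0:ℚ) ≤ (B2.ncard : ℚ) := by positivity
    nlinarith [mul_le_mul_of_nonneg_right hf' (le_of_lt hnm),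
      mul_le_mul_of_nonneg_left hb' hm0]
  · have hA0 : A = ∅ := Set.not_nonempty_iff_eq_empty.mp hAne
    have hKe : K.edgeSet = ∅ := by
      by_contra h
      obtain ⟨x, hx⟩ := Set.nonempty_iff_ne_empty.mpr h
      have hx' := K.edgeSet_subset hx
      rw [edgeSet_subdivide] at hx'
      obtain ⟨⟨v, e⟩, hve, rfl⟩ := hx'
      have hvK : inl v ∈ K.verts := Subgraph.mem_verts_of_mem_edge hx (by
        show inl v ∈ s(inl v, inr e); simp [ι])
      have : v ∈ A := hvK
      simp [hA0] at this
    rw [subgraphDensity, hKe]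
    simp only [Set.ncard_empty, Nat.cast_zero, zero_div]
    positivity

end Aux

theorem stmt_19 {V : Type*} [Fintype V] (G : SimpleGraph V) (H : G.Subgraph)
    (hdense : IsDensest H) :
    (∀ K : (subdivide G).Subgraph, K.verts.Nonempty →
      subgraphDensity K ≤ graphDensity (subdivide H.coe)) ∧
    (∃ K : (subdivide G).Subgraph, K.verts.Nonempty ∧
      subgraphDensity K = graphDensity (subdivide H.coe)) ∧
    graphDensity (subdivide H.coe) =
      2 * (H.edgeSet.ncard : ℚ) / ((H.verts.ncard : ℚ) + (H.edgeSet.ncard : ℚ)) := by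
  have hce : H.coe.edgeSet.ncard = H.edgeSet.ncard := by
    rw [← Subgraph.image_coe_edgeSet_coe H,
      Set.ncard_image_of_injective _ (Sym2.map.injective Subtype.val_injective)]
  have hnv : Nat.card ↥H.verts = H.verts.ncard := Nat.card_coe_set_eq _
  have h3 : graphDensity (subdivide H.coe) =
      2 * (H.edgeSet.ncard : ℚ) / ((H.verts.ncard : ℚ) + (H.edgeSet.ncard : ℚ)) := by
    rw [graphDensity_subdivide H.coe, hce, hnv]
  refine ⟨fun K hK => ?_, ⟨witnessK G H, ?_, ?_⟩, h3⟩
  · rw [h3]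
    exact upper_bound hdense K hK
  · obtain ⟨x, hx⟩ := hdense.1
    exact ⟨Sum.inl x, Or.inl ⟨x, hx, rfl⟩⟩
  · rw [h3, witnessK_density]
end
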